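/- Any two elements of the Young–Fibonacci poset have a least upper bound; explicitly, for u, v with #u ≥ #v, the join is obtained from u by replacing the first max(#v' − d(u'), 0) ones by twos, where u = u'w, v = v'w with w the longest common suffix. -/
import Mathlib


inductive YFDigit : Type
  | one : YFDigit
  | two : YFDigit
  deriving DecidableEq, Repr

abbrev YFWord := List YFDigit

namespace YFWord

/-- value of a digit -/
def digitVal : YFDigit → ℕ
  | .one => 1
  | .two => 2

/-- digit sum of a word -/
def dsum (v : YFWord) : ℕ := (v.map digitVal).sum

/-- number of 2's in a word -/
def twos (v : YFWord) : ℕ := v.count YFDigit.two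

/-- longest common prefix of two lists -/
def commonPrefix : YFWord → YFWord → YFWord
  | a :: x, b :: y => if a = b then a :: commonPrefix x y else []
  | _, _ => []

/-- longest common suffix -/
def lcs (x y : YFWord) : YFWord := (commonPrefix x.reverse y.reverse).reverse

/-- the prefix of `x` remaining after deleting the longest common suffix of `x` and `y` -/
def rem (x y : YFWord) : YFWord := x.take (x.length - (lcs x y).length)

/-- the Young–Fibonacci order: x ≤ y iff, after removing the longest common suffix,
the remaining prefix of `y` has at least as many 2's as the remaining prefix of `x` has digits -/
def yfLE (x y : YFWord) : Prop := (rem x y).length ≤ twos (rem y x)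

/-- strict Young–Fibonacci order -/
def yfLT (x y : YFWord) : Prop := yfLE x y ∧ ¬ yfLE y x

/-- `y` covers `x` in the Young–Fibonacci order -/
def covers (x y : YFWord) : Prop := yfLT x y ∧ ∀ z, ¬ (yfLT x z ∧ yfLT z y)

end YFWord

open YFWord

namespace YFWord

/-- replace the first `k` ones of a word by twos -/
def repl : ℕ → YFWord → YFWord
  | 0, l => l
  | _ + 1, [] => []
  | k + 1, YFDigit.two :: l => YFDigit.two :: repl (k + 1) l
  | k + 1, YFDigit.one :: l => YFDigit.two :: repl k l

/-- the word `o(u,v)`: assuming WLOG `#u ≥ #v`, obtained from `u` by replacing its first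
`max(#v' − d(u'), 0)` ones by twos, where `u = u'w`, `v = v'w`, `w` the longest common suffix -/
def joinWord (u v : YFWord) : YFWord :=
  if v.length ≤ u.length then repl ((rem v u).length - twos (rem u v)) u
  else repl ((rem u v).length - twos (rem v u)) v

end YFWord

open YFWord List

namespace YFWord

lemma commonPrefix_comm : ∀ x y : YFWord, commonPrefix x y = commonPrefix y x
  | a :: x, b :: y => by
    by_cases h : a = b
    · subst h; simp [commonPrefix, commonPrefix_comm x y]
    · simp only [commonPrefix]
      rw [if_neg h, if_neg (fun hh => h hh.symm)]
  | [], [] => rfl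
  | [], _ :: _ => rfl
  | _ :: _, [] => rfl

lemma commonPrefix_prefix_left : ∀ x y : YFWord, commonPrefix x y <+: x
  | a :: x, b :: y => by
    by_cases h : a = b
    · subst h
      simp only [commonPrefix, if_pos rfl]
      exact cons_prefix_cons.mpr ⟨rfl, commonPrefix_prefix_left x y⟩
    · simp [commonPrefix, h]
  | [], [] => by simp [commonPrefix]
  | [], _ :: _ => by simp [commonPrefix]
  | _ :: _, [] => by simp [commonPrefix]

lemma commonPrefix_prefix_right (x y : YFWord) : commonPrefix x y <+: y := by
  rw [commonPrefix_comm]; exact commonPrefix_prefix_left y x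

lemma prefix_commonPrefix : ∀ p x y : YFWord, p <+: x → p <+: y → p <+: commonPrefix x y
  | [], x, y, _, _ => nil_prefix
  | c :: p, a :: x, b :: y, h1, h2 => by
    obtain ⟨he1, h1'⟩ := cons_prefix_cons.mp h1
    obtain ⟨he2, h2'⟩ := cons_prefix_cons.mp h2
    subst he1; subst he2
    simp only [commonPrefix, if_pos rfl]
    exact cons_prefix_cons.mpr ⟨rfl, prefix_commonPrefix p x y h1' h2'⟩
  | c :: p, [], y, h1, _ => absurd h1 (by simp)
  | c :: p, a :: x, [], _, h2 => absurd h2 (by simp)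

lemma lcs_suffix_left (x y : YFWord) : lcs x y <:+ x := by
  rw [← reverse_prefix]
  simpa [lcs] using commonPrefix_prefix_left x.reverse y.reverse

lemma lcs_suffix_right (x y : YFWord) : lcs x y <:+ y := by
  rw [← reverse_prefix]
  simpa [lcs] using commonPrefix_prefix_right x.reverse y.reverse

lemma lcs_comm (x y : YFWord) : lcs x y = lcs y x := by
  simp [lcs, commonPrefix_comm]

lemma suffix_lcs (t x y : YFWord) (h1 : t <:+ x) (h2 : t <:+ y) : t <:+ lcs x y := by
  rw [← reverse_prefix] at h1 h2 ⊢
  simpa [lcs] using prefix_commonPrefix t.reverse x.reverse y.reverse h1 h2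

lemma rem_spec (x y : YFWord) : rem x y ++ lcs x y = x := by
  rw [rem]
  generalize hL : lcs x y = L
  obtain ⟨p, hp⟩ : L <:+ x := hL ▸ lcs_suffix_left x y
  subst hp
  have h : (p ++ L).length - L.length = p.length := by simp
  rw [h, take_left]

lemma twos_le_length (l : YFWord) : twos l ≤ l.length := count_le_length ..

lemma phi_mono (x w t : YFWord) (hw : w <:+ x) (ht : t <:+ w) :
    x.length - w.length + twos w ≤ x.length - t.length + twos t := by
  obtain ⟨p, rfl⟩ := hw
  obtain ⟨m, rfl⟩ := ht
  have h1 := twos_le_length m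
  simp only [twos, count_append, length_append] at *
  omega

lemma yfLE_iff (x y : YFWord) :
    yfLE x y ↔ ∃ t : YFWord, t <:+ x ∧ t <:+ y ∧ x.length - t.length + twos t ≤ twos y := by
  have e1 : (rem x y).length + (lcs x y).length = x.length := by
    conv_rhs => rw [← rem_spec x y]
    simp
  have e2 : twos (rem y x) + twos (lcs x y) = twos y := by
    conv_rhs => rw [← rem_spec y x]
    rw [lcs_comm x y]
    simp [twos, count_append]
  unfold yfLE
  constructor
  · intro h
    exact ⟨lcs x y, lcs_suffix_left x y, lcs_suffix_right x y, by omega⟩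
  · rintro ⟨t, htx, hty, ht⟩
    have hsub : t <:+ lcs x y := suffix_lcs t x y htx hty
    have hmono := phi_mono x (lcs x y) t (lcs_suffix_left x y) hsub
    have hc := twos_le_length (lcs x y)
    have hl : t.length ≤ x.length := htx.length_le
    have hl2 : (lcs x y).length ≤ x.length := (lcs_suffix_left x y).length_le
    omega

lemma suffix_of_suffix_le {s r x : YFWord} (h1 : s <:+ x) (h2 : r <:+ x)
    (h : s.length ≤ r.length) : s <:+ r := by
  rcases suffix_or_suffix_of_suffix h1 h2 with h' | h'
  · exact h'
  · have hl := h'.length_le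
    have he : r = s := h'.eq_of_length (by omega)
    rw [he]

end YFWord

section
open List

namespace YFWord

lemma repl_append : ∀ (k : ℕ) (c z : YFWord), k ≤ c.count YFDigit.one →
    repl k (c ++ z) = repl k c ++ z
  | 0, c, z, _ => by simp [repl]
  | k+1, [], z, h => by simp at h
  | k+1, .two :: c, z, h => by
    simp only [cons_append, repl]
    exact congrArg _ (repl_append (k+1) c z (by simpa using h))
  | k+1, .one :: c, z, h => by
    simp only [cons_append, repl]
    exact congrArg _ (repl_append k c z (by simp [count_cons] at h; omega))

lemma repl_decomp : ∀ (k : ℕ) (l : YFWord), k ≤ l.count YFDigit.one →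
    ∃ c r : YFWord, l = c ++ r ∧ repl k l = List.replicate c.length YFDigit.two ++ r ∧
      c.count YFDigit.one = k ∧ (c = [] ∨ ∃ c', c = c' ++ [YFDigit.one])
  | 0, l, _ => ⟨[], l, by simp [repl]⟩
  | k+1, [], h => by simp at h
  | k+1, .two :: l, h => by
    obtain ⟨c, r, h1, h2, h3, h4⟩ := repl_decomp (k+1) l (by simpa using h)
    refine ⟨.two :: c, r, by simp [h1], ?_, by simp [count_cons, h3], ?_⟩
    · simp [repl, h2, replicate_succ]
    · rcases h4 with rfl | ⟨c', rfl⟩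
      · simp at h3
      · exact Or.inr ⟨.two :: c', by simp⟩
  | k+1, .one :: l, h => by
    obtain ⟨c, r, h1, h2, h3, h4⟩ := repl_decomp k l (by simp [count_cons] at h; omega)
    refine ⟨.one :: c, r, by simp [h1], ?_, by simp [count_cons, h3], ?_⟩
    · simp [repl, h2, replicate_succ]
    · rcases h4 with rfl | ⟨c', rfl⟩
      · exact Or.inr ⟨[], by simp⟩
      · exact Or.inr ⟨.one :: c', by simp⟩

lemma ones_add_twos : ∀ l : YFWord, l.count YFDigit.one + twos l = l.length
  | [] => rfl
  | d :: l => by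
    have := ones_add_twos l
    cases d <;> simp only [twos, count_cons] at * <;> simp <;> omega

lemma main (u v : YFWord) (hlen : v.length ≤ u.length) :
    yfLE u (repl ((rem v u).length - twos (rem u v)) u) ∧
    yfLE v (repl ((rem v u).length - twos (rem u v)) u) ∧
    ∀ y : YFWord, yfLE u y → yfLE v y →
      yfLE (repl ((rem v u).length - twos (rem u v)) u) y := by
  set w := lcs u v with hw
  set a := rem u v with ha
  set b := rem v u with hb
  have hu : a ++ w = u := rem_spec u v
  have hv : b ++ w = v := by rw [hw, lcs_comm]; exact rem_spec v u
  set k := b.length - twos a with hk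
  -- basic length facts
  have e_lu : a.length + w.length = u.length := by rw [← hu]; simp
  have e_lv : b.length + w.length = v.length := by rw [← hv]; simp
  have hba : b.length ≤ a.length := by omega
  have h1a := ones_add_twos a
  have hk_le : k ≤ a.count YFDigit.one := by omega
  obtain ⟨c, r₁, hca, hrepl, hc1, hc2⟩ := repl_decomp k a hk_le
  have hju : repl k u = List.replicate c.length YFDigit.two ++ r₁ ++ w := by
    conv_lhs => rw [← hu]
    rw [repl_append k a w hk_le, hrepl]
  set j := repl k u with hj
  -- numeric facts
  have e_la : c.length + r₁.length = a.length := by rw [hca]; simp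
  have e_ta : twos c + twos r₁ = twos a := by rw [hca]; simp [twos, count_append]
  have e_lc : c.length = k + twos c := by
    have := ones_add_twos c; omega
  have e_tj : twos j = c.length + twos r₁ + twos w := by
    rw [hju]; simp only [twos, count_append]; simp
  have e_lj : j.length = u.length := by
    rw [hju]; simp; omega
  -- suffix facts
  have hrwu : r₁ ++ w <:+ u := ⟨c, by rw [← append_assoc, ← hca, hu]⟩
  have hrwj : r₁ ++ w <:+ j := ⟨List.replicate c.length YFDigit.two,
    by rw [← append_assoc, ← hju]⟩
  have hwv : w <:+ v := ⟨b, hv⟩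
  have hwj : w <:+ j := ⟨List.replicate c.length YFDigit.two ++ r₁, by rw [← hju]⟩
  refine ⟨?_, ?_, ?_⟩
  · -- u ≤ j
    rw [yfLE_iff]
    refine ⟨r₁ ++ w, hrwu, hrwj, ?_⟩
    simp only [length_append, twos, count_append] at *
    omega
  · -- v ≤ j
    rw [yfLE_iff]
    refine ⟨w, hwv, hwj, ?_⟩
    simp only [length_append, twos, count_append] at *
    omega
  · -- least
    intro y hy1 hy2
    rw [yfLE_iff] at hy1 hy2 ⊢
    obtain ⟨s, hsu, hsy, hs⟩ := hy1
    by_cases hcase : s.length ≤ (r₁ ++ w).length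
    · -- case A
      have hsr : s <:+ r₁ ++ w := suffix_of_suffix_le hsu hrwu hcase
      exact ⟨s, hsr.trans hrwj, hsy, by omega⟩
    · -- case B
      push_neg at hcase
      have hsl : s.length ≤ u.length := hsu.length_le
      have hcpos : 0 < c.length := by
        simp only [length_append] at hcase; omega
      have hkpos : 1 ≤ k := by
        rcases hc2 with rfl | ⟨c', rfl⟩
        · simp at hcpos
        · simp [count_append, count_cons] at hc1; omega
      have hkb : k + twos a = b.length := by omega
      have hrs : r₁ ++ w <:+ s := suffix_of_suffix_le hrwu hsu (le_of_lt hcase)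
      have hry : r₁ ++ w <:+ y := hrs.trans hsy
      obtain ⟨t, htv, hty, ht⟩ := hy2
      have key : v.length - w.length + twos w ≤ twos y := by
        rcases suffix_or_suffix_of_suffix htv hwv with h' | h'
        · exact le_trans (phi_mono v w t hwv h') ht
        · by_cases hlt : t.length ≤ w.length
          · have he : w = t := h'.eq_of_length (le_antisymm h'.length_le hlt)
            rw [he]; exact ht
          · exfalso
            obtain ⟨m, hm⟩ := h'
            rcases m.eq_nil_or_concat with rfl | ⟨m', d, rfl⟩
            · rw [nil_append] at hm; subst hm; exact hlt le_rfl
            · have hdw_t : d :: w <:+ t :=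
                ⟨m', by rw [← hm]; simp [concat_eq_append, append_assoc]⟩
              have hdw_y : d :: w <:+ y := hdw_t.trans hty
              have hdw_v : d :: w <:+ v := hdw_t.trans htv
              have hdw_s : d :: w <:+ s := by
                refine suffix_of_suffix_le hdw_y hsy ?_
                simp only [length_cons, length_append] at hcase ⊢
                omega
              have hdw_u : d :: w <:+ u := hdw_s.trans hsu
              have hbad : d :: w <:+ w := by
                rw [hw]; exact suffix_lcs _ u v hdw_u hdw_v
              have := hbad.length_le
              simp at this
      refine ⟨r₁ ++ w, hrwj, hry, ?_⟩
      simp only [length_append, twos, count_append] at *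
      omega

end YFWord

end


theorem yf_lub_exists (u v : YFWord) :
    yfLE u (joinWord u v) ∧ yfLE v (joinWord u v) ∧
    ∀ y : YFWord, yfLE u y → yfLE v y → yfLE (joinWord u v) y := by
  by_cases h : v.length ≤ u.length
  · simpa [joinWord, h] using YFWord.main u v h
  · obtain ⟨h1, h2, h3⟩ := YFWord.main v u (le_of_not_ge h)
    refine ⟨?_, ?_, ?_⟩ <;> simp only [joinWord, if_neg h]
    · exact h2
    · exact h1
    · exact fun y hy1 hy2 => h3 y hy2 hy1
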